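/- arXiv:1109.6835 — 4 statements merged into one kernel-verified Lean document; each statement's English description precedes it below -/
import Mathlib

section
/- Let P_m, ..., P_{m+n-1} be polynomials in C[x_1,...,x_n] where each P_k = ρ_k + P̃_{k-1}, with ρ_k the k-th power sum polynomial and P̃_{k-1} an arbitrary polynomial of total degree less than k. Then the variety V_n ⊆ C^n defined by P_m = P_{m+1} = ... = P_{m+n-1} = 0 is a finite set. -/
open MvPolynomial

/-- If the `n` consecutive power sums `ρ_m, …, ρ_{m+n-1}` vanish at `y`, then all power
sums `ρ_k`, `k ≥ m`, vanish at `y`. -/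
lemma psum_all {n : ℕ} (m : ℕ) (y : Fin n → ℂ)
    (h : ∀ k ∈ Finset.Icc m (m + n - 1), ∑ i, y i ^ k = 0) :
    ∀ k, m ≤ k → ∑ i, y i ^ k = 0 := by
  rcases Nat.eq_zero_or_pos n with hn | hn
  · intro k _; subst hn; simp
  intro k
  induction k using Nat.strong_induction_on with
  | _ k ih =>
    intro hk
    by_cases hsmall : k ≤ m + n - 1
    · exact h k (Finset.mem_Icc.mpr ⟨hk, hsmall⟩)
    · have hkn : m + n ≤ k := by omega
      set q : Polynomial ℂ := ∏ i, (Polynomial.X - Polynomial.C (y i)) with hq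
      have hq_monic : q.Monic :=
        Polynomial.monic_prod_of_monic _ _ fun i _ => Polynomial.monic_X_sub_C _
      have hq_deg : q.natDegree = n := by
        rw [hq, Polynomial.natDegree_prod _ _ fun i _ => Polynomial.X_sub_C_ne_zero _]
        simp
      have hq_eval : ∀ i : Fin n, Polynomial.eval (y i) q = 0 := by
        intro i
        rw [hq, Polynomial.eval_prod]
        exact Finset.prod_eq_zero (Finset.mem_univ i) (by simp)
      set r : Polynomial ℂ := Polynomial.X ^ n - q with hr
      have hr_deg : r.natDegree < n := by
        rcases eq_or_ne r 0 with h0 | h0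
        · rw [h0]; simpa using hn
        · have h1 : r.natDegree ≤ n := by
            refine le_trans (Polynomial.natDegree_sub_le _ _) ?_
            simp [hq_deg]
          rcases lt_or_eq_of_le h1 with h2 | h2
          · exact h2
          · exfalso
            have : r.coeff n = 0 := by
              rw [hr, Polynomial.coeff_sub, Polynomial.coeff_X_pow, if_pos rfl]
              have := hq_monic.coeff_natDegree
              rw [hq_deg] at this
              rw [this]; ring
            have : r.leadingCoeff = 0 := by rwa [Polynomial.leadingCoeff, h2]
            exact h0 (Polynomial.leadingCoeff_eq_zero.mp this)
      have hyn : ∀ i : Fin n, y i ^ n = Polynomial.eval (y i) r := by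
        intro i; rw [hr]; simp [hq_eval i]
      calc ∑ i, y i ^ k = ∑ i, y i ^ (k - n) * Polynomial.eval (y i) r := by
             refine Finset.sum_congr rfl fun i _ => ?_
             rw [← hyn, ← pow_add]
             congr 1
             omega
        _ = ∑ i, ∑ j ∈ Finset.range n, y i ^ (k - n) * (r.coeff j * y i ^ j) := by
             refine Finset.sum_congr rfl fun i _ => ?_
             rw [Polynomial.eval_eq_sum_range' hr_deg, Finset.mul_sum]
        _ = ∑ j ∈ Finset.range n, r.coeff j * ∑ i, y i ^ (k - n + j) := by
             rw [Finset.sum_comm]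
             refine Finset.sum_congr rfl fun j _ => ?_
             rw [Finset.mul_sum]
             refine Finset.sum_congr rfl fun i _ => ?_
             rw [pow_add]; ring
        _ = 0 := by
             refine Finset.sum_eq_zero fun j hj => ?_
             have hj' : j < n := Finset.mem_range.mp hj
             rw [ih (k - n + j) (by omega) (by omega), mul_zero]

/-- Only `0` is a common zero of `n` consecutive power sums starting at `m ≥ 1`. -/
lemma psum_zero {n : ℕ} (m : ℕ) (_hm : 1 ≤ m) (y : Fin n → ℂ)
    (h : ∀ k ∈ Finset.Icc m (m + n - 1), ∑ i, y i ^ k = 0) : y = 0 := by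
  have hall := psum_all m y h
  by_contra hy
  have : ∃ i, y i ≠ 0 := by
    by_contra hc
    push_neg at hc
    exact hy (funext fun i => hc i)
  obtain ⟨i₀, hi₀⟩ := this
  set s : Finset ℂ := Finset.image y Finset.univ with hs
  have hys : y i₀ ∈ s := Finset.mem_image_of_mem y (Finset.mem_univ i₀)
  set b : Polynomial ℂ := Lagrange.basis s id (y i₀) with hb
  have hinj : Set.InjOn (id : ℂ → ℂ) s := Function.injective_id.injOn
  have key : ∀ p : Polynomial ℂ, ∑ i, y i ^ m * Polynomial.eval (y i) p = 0 := by
    intro p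
    have : ∀ i : Fin n, y i ^ m * Polynomial.eval (y i) p
        = ∑ j ∈ Finset.range (p.natDegree + 1), p.coeff j * y i ^ (m + j) := by
      intro i
      rw [Polynomial.eval_eq_sum_range, Finset.mul_sum]
      refine Finset.sum_congr rfl fun j _ => ?_
      rw [pow_add]; ring
    rw [Finset.sum_congr rfl fun i _ => this i, Finset.sum_comm]
    refine Finset.sum_eq_zero fun j _ => ?_
    rw [← Finset.mul_sum, hall (m + j) (by omega), mul_zero]
  have hkey := key b
  have heval : ∀ i : Fin n, y i ^ m * Polynomial.eval (y i) b
      = if y i = y i₀ then y i₀ ^ m else 0 := by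
    intro i
    by_cases hyi : y i = y i₀
    · rw [if_pos hyi, hyi]
      have : Polynomial.eval (y i₀) b = 1 := by
        have := Lagrange.eval_basis_self hinj hys
        simpa using this
      rw [this, mul_one]
    · rw [if_neg hyi]
      have : Polynomial.eval (y i) b = 0 := by
        have := Lagrange.eval_basis_of_ne (v := (id : ℂ → ℂ)) (s := s)
          (i := y i₀) (j := y i)
          (fun hc => hyi (hc.symm)) (Finset.mem_image_of_mem y (Finset.mem_univ i))
        simpa using this
      rw [this, mul_zero]
  rw [Finset.sum_congr rfl fun i _ => heval i, ← Finset.sum_filter] at hkey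
  have hmem : i₀ ∈ Finset.filter (fun i => y i = y i₀) Finset.univ := by
    simp
  rw [Finset.sum_const] at hkey
  have hcard : 0 < (Finset.filter (fun i => y i = y i₀) Finset.univ).card :=
    Finset.card_pos.mpr ⟨i₀, hmem⟩
  have hne : ((Finset.filter (fun i => y i = y i₀) Finset.univ).card : ℂ) ≠ 0 :=
    Nat.cast_ne_zero.mpr hcard.ne'
  rw [nsmul_eq_mul] at hkey
  exact (pow_ne_zero _ hi₀) ((mul_eq_zero.mp hkey).resolve_left hne)

lemma homComp_mul_homog {n : ℕ} (p q : MvPolynomial (Fin n) ℂ) {e d : ℕ}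
    (hq : q.IsHomogeneous e) (hd : e ≤ d) :
    homogeneousComponent d (p * q) = homogeneousComponent (d - e) p * q := by
  conv_lhs => rw [show p * q
      = (∑ j ∈ Finset.range (p.totalDegree + 1), homogeneousComponent j p) * q by
    rw [sum_homogeneousComponent]]
  rw [Finset.sum_mul, map_sum]
  have term : ∀ j : ℕ, homogeneousComponent d (homogeneousComponent j p * q)
      = if d = j + e then homogeneousComponent j p * q else 0 := fun j =>
    homogeneousComponent_of_mem
      ((mem_homogeneousSubmodule _ _).mpr
        ((homogeneousComponent_isHomogeneous j p).mul hq))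
  rw [Finset.sum_congr rfl fun j _ => term j]
  by_cases hle : d - e ≤ p.totalDegree
  · rw [Finset.sum_eq_single (d - e)]
    · rw [if_pos (by omega)]
    · intro j hj hne
      rw [if_neg (by omega)]
    · intro hmem
      exact absurd (Finset.mem_range.mpr (by omega)) hmem
  · rw [homogeneousComponent_eq_zero _ _ (by omega), zero_mul]
    refine Finset.sum_eq_zero fun j hj => ?_
    have hj' : j < p.totalDegree + 1 := Finset.mem_range.mp hj
    rw [if_neg (by omega)]

lemma rho_homog {n : ℕ} (k : ℕ) :
    (∑ i : Fin n, (X i : MvPolynomial (Fin n) ℂ) ^ k).IsHomogeneous k :=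
  IsHomogeneous.sum _ _ _ fun i _ => isHomogeneous_X_pow _ _

/-- homogeneous representation lemma -/
lemma homog_rep {n : ℕ} (K : Finset ℕ) (f : MvPolynomial (Fin n) ℂ) (d : ℕ)
    (hf : f.IsHomogeneous d)
    (hfI : f ∈ Ideal.span ((fun k => ∑ i : Fin n, (X i : MvPolynomial (Fin n) ℂ) ^ k) '' ↑K))
    (hKd : ∀ k ∈ K, k ≤ d) :
    ∃ B : ℕ → MvPolynomial (Fin n) ℂ, (∀ k ∈ K, (B k).IsHomogeneous (d - k)) ∧
      f = ∑ k ∈ K, B k * (∑ i : Fin n, (X i : MvPolynomial (Fin n) ℂ) ^ k) := by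
  set ρ : ℕ → MvPolynomial (Fin n) ℂ := fun k => ∑ i : Fin n, X i ^ k with hρ
  have hfI' : f ∈ Submodule.span (MvPolynomial (Fin n) ℂ) (ρ '' ↑K) := hfI
  rw [Finsupp.mem_span_image_iff_linearCombination] at hfI'
  obtain ⟨l, hl, hsum⟩ := hfI'
  have hrep : ∑ k ∈ K, l k * ρ k = f := by
    rw [← hsum, Finsupp.linearCombination_apply, Finsupp.sum]
    refine (Finset.sum_subset ((Finsupp.mem_supported _ _).mp hl) ?_).symm
    intro k _ hk
    rw [Finsupp.notMem_support_iff.mp hk, zero_mul]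
  refine ⟨fun k => homogeneousComponent (d - k) (l k), fun k hk =>
    homogeneousComponent_isHomogeneous _ _, ?_⟩
  have hfc : homogeneousComponent d f = f :=
    (homogeneousComponent_of_mem ((mem_homogeneousSubmodule _ _).mpr hf)).trans (if_pos rfl)
  calc f = homogeneousComponent d (∑ k ∈ K, l k * ρ k) := by rw [hrep, hfc]
    _ = ∑ k ∈ K, homogeneousComponent (d - k) (l k) * ρ k := by
        rw [map_sum]
        exact Finset.sum_congr rfl fun k hk =>
          homComp_mul_homog (l k) (ρ k) (rho_homog k) (hKd k hk)

lemma descent {n m : ℕ} (hm : 1 ≤ m) (hn : 1 ≤ n) {N : ℕ} (hN : m + n ≤ N)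
    (P Pt : ℕ → MvPolynomial (Fin n) ℂ)
    (hdeg : ∀ k ∈ Finset.Icc m (m + n - 1), (Pt k).totalDegree < k)
    (hP : ∀ k ∈ Finset.Icc m (m + n - 1), P k = (∑ i : Fin n, X i ^ k) + Pt k)
    (B : Fin n → ℕ → MvPolynomial (Fin n) ℂ)
    (hB : ∀ i : Fin n, ∀ k ∈ Finset.Icc m (m + n - 1), (B i k).IsHomogeneous (N - k))
    (hBrep : ∀ i : Fin n, (X i : MvPolynomial (Fin n) ℂ) ^ N
      = ∑ k ∈ Finset.Icc m (m + n - 1), B i k * ∑ j : Fin n, X j ^ k)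
    (f : MvPolynomial (Fin n) ℂ) :
    ∃ g : MvPolynomial (Fin n) ℂ, g.totalDegree < n * (N - 1) + 1 ∧
      f - g ∈ Ideal.span (P '' ↑(Finset.Icc m (m + n - 1))) := by
  set K := Finset.Icc m (m + n - 1) with hK
  set J := Ideal.span (P '' ↑K) with hJ
  set D := n * (N - 1) + 1 with hD
  have hND : N ≤ D := by
    have : 1 * (N - 1) + 1 ≤ n * (N - 1) + 1 := by
      have := Nat.mul_le_mul_right (N - 1) hn
      omega
    omega
  -- strong induction on an upper bound for the total degree
  suffices H : ∀ d : ℕ, ∀ f : MvPolynomial (Fin n) ℂ, f.totalDegree ≤ d →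
      ∃ g : MvPolynomial (Fin n) ℂ, g.totalDegree < D ∧ f - g ∈ J by
    exact H f.totalDegree f le_rfl
  intro d
  induction d using Nat.strong_induction_on with
  | _ d ih =>
    intro f hf
    by_cases hfD : f.totalDegree < D
    · exact ⟨f, hfD, by simp [J.zero_mem]⟩
    push_neg at hfD
    set d₀ := f.totalDegree with hd₀
    have hd₀pos : 1 ≤ d₀ := le_trans (by omega) hfD
    -- reduce each monomial of the top homogeneous component
    have hmonored : ∀ α ∈ (homogeneousComponent d₀ f).support,
        ∃ hα : MvPolynomial (Fin n) ℂ, hα.totalDegree < d₀ ∧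
          monomial α (coeff α (homogeneousComponent d₀ f)) - hα ∈ J := by
      intro α hα
      have hcoeff : coeff α (homogeneousComponent d₀ f) ≠ 0 := mem_support_iff.mp hα
      have hαdeg : α.degree = d₀ := by
        have := homogeneousComponent_isHomogeneous d₀ f hcoeff
        rw [Finsupp.degree_eq_weight_one]; exact this
      have hαsum : ∑ i : Fin n, α i = d₀ := by
        rw [← hαdeg, Finsupp.degree]
        exact (Finset.sum_subset (Finset.subset_univ _)
          (fun i _ hi => Finsupp.notMem_support_iff.mp hi)).symm
      -- pigeonhole: some exponent is at least N
      have hex : ∃ i : Fin n, N ≤ α i := by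
        by_contra hc
        push_neg at hc
        have : ∑ i : Fin n, α i ≤ ∑ _i : Fin n, (N - 1) :=
          Finset.sum_le_sum fun i _ => by have := hc i; omega
        rw [Finset.sum_const, Finset.card_univ, Fintype.card_fin, smul_eq_mul] at this
        omega
      obtain ⟨i, hNi⟩ := hex
      set c := coeff α (homogeneousComponent d₀ f) with hc
      set β := α - Finsupp.single i N with hβ
      have hβα : β + Finsupp.single i N = α := by
        ext j
        simp only [Finsupp.add_apply, Finsupp.coe_tsub, Pi.sub_apply, Finsupp.single_apply, hβ]
        split_ifs with hij
        · subst hij; omega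
        · omega
      have hβsum : (∑ j : Fin n, β j) + N = d₀ := by
        rw [← hαsum]
        have : ∀ j : Fin n, β j + Finsupp.single i N j = α j := fun j => by
          rw [← hβα]; simp
        rw [← Finset.sum_congr rfl fun j _ => this j, Finset.sum_add_distrib]
        have : ∑ j : Fin n, Finsupp.single i N j = N := by
          rw [Finset.sum_eq_single i (fun j _ hj => Finsupp.single_eq_of_ne' (Ne.symm hj))
            (fun h => absurd (Finset.mem_univ i) h)]
          simp
        omega
      have hmono : monomial α c = monomial β c * X i ^ N := by
        rw [X_pow_eq_monomial, monomial_mul, mul_one, hβα]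
      refine ⟨-(monomial β c * ∑ k ∈ K, B i k * Pt k), ?_, ?_⟩
      · -- degree bound
        rw [totalDegree_neg]
        refine lt_of_le_of_lt (totalDegree_mul _ _) ?_
        have h1 : (monomial β c).totalDegree ≤ d₀ - N := by
          rw [totalDegree_monomial _ hcoeff]
          rw [show (β.sum fun _ e => e) = ∑ j : Fin n, β j from
            Finset.sum_subset (Finset.subset_univ _)
              (fun j _ hj => Finsupp.notMem_support_iff.mp hj)]
          omega
        have h2 : (∑ k ∈ K, B i k * Pt k).totalDegree ≤ N - 1 := by
          refine le_trans (totalDegree_finset_sum _ _) ?_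
          refine Finset.sup_le fun k hk => ?_
          refine le_trans (totalDegree_mul _ _) ?_
          have hb := (hB i k hk).totalDegree_le
          have hp := hdeg k hk
          have hk' := Finset.mem_Icc.mp hk
          omega
        omega
      · -- membership in J
        have key : monomial α c - -(monomial β c * ∑ k ∈ K, B i k * Pt k)
            = ∑ k ∈ K, (monomial β c * B i k) * P k := by
          rw [sub_neg_eq_add, hmono, hBrep i, ← mul_add, ← Finset.sum_add_distrib,
            Finset.mul_sum]
          refine Finset.sum_congr rfl fun k hk => ?_
          rw [hP k hk]
          ring
        rw [key]
        refine Ideal.sum_mem _ fun k hk => ?_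
        exact Ideal.mul_mem_left _ _ (Ideal.subset_span ⟨k, hk, rfl⟩)
    choose hfun hfdeg hfmem using hmonored
    set h : MvPolynomial (Fin n) ℂ :=
      ∑ α ∈ (homogeneousComponent d₀ f).support.attach, hfun α.1 α.2 with hh
    have htop : homogeneousComponent d₀ f - h ∈ J := by
      have : homogeneousComponent d₀ f - h
          = ∑ α ∈ (homogeneousComponent d₀ f).support.attach,
            (monomial α.1 (coeff α.1 (homogeneousComponent d₀ f)) - hfun α.1 α.2) := by
        rw [Finset.sum_sub_distrib, hh]
        congr 1
        rw [Finset.sum_attach _ (fun α => monomial α (coeff α (homogeneousComponent d₀ f)))]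
        exact (homogeneousComponent d₀ f).as_sum
      rw [this]
      exact Ideal.sum_mem _ fun α _ => hfmem α.1 α.2
    have hhdeg : h.totalDegree < d₀ := by
      rw [hh]
      refine lt_of_le_of_lt (totalDegree_finset_sum _ _) ?_
      have hbot : (⊥ : ℕ) < d₀ := hd₀pos
      rw [Finset.sup_lt_iff hbot]
      exact fun α _ => hfdeg α.1 α.2
    -- the low-degree part
    set flow := f - homogeneousComponent d₀ f with hflow
    have hbot : (⊥ : ℕ) < d₀ := hd₀pos
    have hflowdeg : flow.totalDegree < d₀ := by
      have hsum := sum_homogeneousComponent f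
      rw [Finset.sum_range_succ] at hsum
      have heq : flow = ∑ j ∈ Finset.range d₀, homogeneousComponent j f :=
        (eq_sub_iff_add_eq.mpr hsum).symm
      rw [heq]
      refine lt_of_le_of_lt (totalDegree_finset_sum _ _) ?_
      rw [Finset.sup_lt_iff hbot]
      intro j hj
      exact lt_of_le_of_lt (homogeneousComponent_isHomogeneous j f).totalDegree_le
        (Finset.mem_range.mp hj)
    have hg' : (h + flow).totalDegree ≤ d₀ - 1 := by
      refine le_trans (totalDegree_add _ _) ?_
      exact max_le (by omega) (by omega)
    obtain ⟨g, hgdeg, hgJ⟩ := ih (d₀ - 1) (by omega) (h + flow) hg'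
    refine ⟨g, hgdeg, ?_⟩
    have hsplit : f - g = (homogeneousComponent d₀ f - h) + ((h + flow) - g) := by
      rw [hflow]; ring
    rw [hsplit]
    exact J.add_mem htop hgJ

/-- If `P k = ρ_k + P̃_{k-1}` for `k = m, …, m+n-1`, where `ρ_k` is the `k`-th power sum
and `P̃_{k-1}` has total degree `< k`, then the common zero set of the `P k` in `ℂⁿ`
is finite. -/
theorem stmt0 (m n : ℕ) (hm : 1 ≤ m) (hn : 1 ≤ n)
    (P Pt : ℕ → MvPolynomial (Fin n) ℂ)
    (hdeg : ∀ k ∈ Finset.Icc m (m + n - 1), (Pt k).totalDegree < k)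
    (hP : ∀ k ∈ Finset.Icc m (m + n - 1), P k = (∑ i : Fin n, X i ^ k) + Pt k) :
    {x : Fin n → ℂ | ∀ k ∈ Finset.Icc m (m + n - 1), eval x (P k) = 0}.Finite := by
  classical
  set K := Finset.Icc m (m + n - 1) with hK
  set ρ : ℕ → MvPolynomial (Fin n) ℂ := fun k => ∑ i : Fin n, X i ^ k with hρ
  set I := Ideal.span (ρ '' ↑K) with hI
  -- Step B: the zero locus of the power sums is {0}, so powers of the variables lie in I
  have hzl : MvPolynomial.zeroLocus ℂ I ⊆ {(0 : Fin n → ℂ)} := by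
    intro x hx
    have hx0 : x = 0 := by
      refine psum_zero m hm x fun k hk => ?_
      have h1 : eval x (ρ k) = 0 := hx _ (Ideal.subset_span ⟨k, hk, rfl⟩)
      simpa [hρ] using h1
    exact hx0 ▸ rfl
  have hXrad : ∀ i : Fin n, ∃ t : ℕ, (X i : MvPolynomial (Fin n) ℂ) ^ t ∈ I := by
    intro i
    have hmem : (X i : MvPolynomial (Fin n) ℂ) ∈ I.radical := by
      rw [← vanishingIdeal_zeroLocus_eq_radical (K := ℂ)]
      intro x hx
      have hx0 : x = 0 := hzl hx
      subst hx0
      simp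
    exact Ideal.mem_radical_iff.mp hmem
  choose N₀ hN₀ using hXrad
  set N := m + n + Finset.univ.sup N₀ with hNdef
  have hN : m + n ≤ N := Nat.le_add_right _ _
  have hXN : ∀ i : Fin n, (X i : MvPolynomial (Fin n) ℂ) ^ N ∈ I := by
    intro i
    have hle : N₀ i ≤ N := le_trans (Finset.le_sup (Finset.mem_univ i)) (by omega)
    have hsplit : (X i : MvPolynomial (Fin n) ℂ) ^ N = X i ^ (N - N₀ i) * X i ^ N₀ i := by
      rw [← pow_add]
      congr 1
      omega
    rw [hsplit]
    exact Ideal.mul_mem_left _ _ (hN₀ i)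
  -- homogeneous representation of X i ^ N
  have hrep : ∀ i : Fin n, ∃ B : ℕ → MvPolynomial (Fin n) ℂ,
      (∀ k ∈ K, (B k).IsHomogeneous (N - k)) ∧
      (X i : MvPolynomial (Fin n) ℂ) ^ N = ∑ k ∈ K, B k * ρ k := by
    intro i
    refine homog_rep K _ N (isHomogeneous_X_pow i N) (hXN i) fun k hk => ?_
    have := Finset.mem_Icc.mp hk
    omega
  choose B hB hBrep using hrep
  have hdesc := descent hm hn hN P Pt hdeg hP B hB hBrep
  set D := n * (N - 1) + 1 with hD
  set J := Ideal.span (P '' ↑K) with hJ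
  set V := {x : Fin n → ℂ | ∀ k ∈ K, eval x (P k) = 0} with hV
  show V.Finite
  have hVJ : ∀ x ∈ V, ∀ p ∈ J, eval x p = 0 := by
    intro x hx p hp
    have hle : J ≤ RingHom.ker (eval x) := by
      rw [hJ]
      refine Ideal.span_le.mpr ?_
      rintro q ⟨k, hk, rfl⟩
      exact hx k hk
    exact hle hp
  by_contra hinf
  rw [← Set.not_infinite, not_not] at hinf
  obtain ⟨T, hTV, hTcard⟩ := hinf.exists_subset_card_eq
    (Module.finrank ℂ (restrictTotalDegree (Fin n) ℂ (D - 1)) + 1)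
  -- separating polynomials of low degree
  have hg : ∀ t ∈ T, ∃ g : MvPolynomial (Fin n) ℂ, g.totalDegree < D ∧
      eval t g = 1 ∧ ∀ t' ∈ T, t' ≠ t → eval t' g = 0 := by
    intro t ht
    -- first build an arbitrary separating polynomial
    have hcoord : ∀ t' : Fin n → ℂ, t' ≠ t → ∃ i, t' i ≠ t i := by
      intro t' h
      by_contra hc
      push_neg at hc
      exact h (funext hc)
    choose ci hci using hcoord
    set ft : MvPolynomial (Fin n) ℂ :=
      ∏ s ∈ (T.erase t).attach,
        (C (t (ci s.1 (Finset.mem_erase.mp s.2).1)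
            - s.1 (ci s.1 (Finset.mem_erase.mp s.2).1))⁻¹
          * (X (ci s.1 (Finset.mem_erase.mp s.2).1)
            - C (s.1 (ci s.1 (Finset.mem_erase.mp s.2).1)))) with hft
    have hft1 : eval t ft = 1 := by
      rw [hft, map_prod]
      refine Finset.prod_eq_one fun s _ => ?_
      have hne : t (ci s.1 (Finset.mem_erase.mp s.2).1)
          - s.1 (ci s.1 (Finset.mem_erase.mp s.2).1) ≠ 0 :=
        sub_ne_zero.mpr (Ne.symm (hci s.1 (Finset.mem_erase.mp s.2).1))
      simp only [map_mul, map_sub, eval_C, eval_X]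
      exact inv_mul_cancel₀ hne
    have hft0 : ∀ t' ∈ T, t' ≠ t → eval t' ft = 0 := by
      intro t' ht' hne
      rw [hft, map_prod]
      have hmem : (⟨t', Finset.mem_erase.mpr ⟨hne, ht'⟩⟩ : {x // x ∈ T.erase t})
          ∈ (T.erase t).attach := Finset.mem_attach _ _
      refine Finset.prod_eq_zero hmem ?_
      simp only [map_mul, map_sub, eval_C, eval_X]
      rw [sub_self, mul_zero]
    obtain ⟨g, hgdeg, hgJ⟩ := hdesc ft
    refine ⟨g, hgdeg, ?_, ?_⟩
    · have h0 := hVJ t (hTV ht) _ hgJ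
      rw [map_sub] at h0
      have := sub_eq_zero.mp h0
      rw [← this, hft1]
    · intro t' ht' hne
      have h0 := hVJ t' (hTV ht') _ hgJ
      rw [map_sub] at h0
      have := sub_eq_zero.mp h0
      rw [← this, hft0 t' ht' hne]
  choose gT hgdeg hgone hgzero using hg
  have hmemW : ∀ (t) (ht : t ∈ T), gT t ht ∈ restrictTotalDegree (Fin n) ℂ (D - 1) := by
    intro t ht
    rw [mem_restrictTotalDegree]
    have := hgdeg t ht
    omega
  set u : {x // x ∈ T} → restrictTotalDegree (Fin n) ℂ (D - 1) :=
    fun t => ⟨gT t.1 t.2, hmemW t.1 t.2⟩ with hu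
  have hli : LinearIndependent ℂ u := by
    rw [Fintype.linearIndependent_iff]
    intro cvec hsum t
    have hev := congrArg (fun w : restrictTotalDegree (Fin n) ℂ (D - 1)
      => eval t.1 (w : MvPolynomial (Fin n) ℂ)) hsum
    simp only [hu, AddSubmonoidClass.coe_finset_sum, SetLike.val_smul, map_sum,
      ZeroMemClass.coe_zero, map_zero, smul_eval, smul_eq_mul] at hev
    rw [Finset.sum_eq_single t] at hev
    · rw [hgone t.1 t.2, mul_one] at hev
      exact hev
    · intro s _ hst
      rw [hgzero s.1 s.2 t.1 t.2 ?_, mul_zero]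
      intro hc
      exact hst (Subtype.ext hc.symm)
    · intro hc
      exact absurd (Finset.mem_univ t) hc
  have hcard := hli.fintype_card_le_finrank
  rw [Fintype.card_coe, hTcard] at hcard
  omega
end

section
/- Let μ_1(t),...,μ_n(t) be real analytic functions on an interval solving μ_i'(t) = μ_i(t)^2 + κ_i for constants κ_i, and fix k ≥ 1. Then for each j ≥ 1 there exists a polynomial P̂_{k+j-1} in n variables of total degree less than k+j, with coefficients depending only on κ_1,...,κ_n, k, j, such that the j-th derivative of Q_k(t) := ∑_i μ_i(t)^k satisfies Q_k^{(j)}(t) = k(k+1)⋯(k+j−1) · (Q_{k+j}(t) + P̂_{k+j-1}(μ_1(t),...,μ_n(t))). -/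
open MvPolynomial

noncomputable def Dop (n : ℕ) (κ : Fin n → ℝ) (P : MvPolynomial (Fin n) ℝ) :
    MvPolynomial (Fin n) ℝ :=
  ∑ i, pderiv i P * (X i ^ 2 + C (κ i))

lemma Dop_C (n : ℕ) (κ : Fin n → ℝ) (a : ℝ) : Dop n κ (C a) = 0 := by
  simp [Dop]

lemma Dop_add (n : ℕ) (κ : Fin n → ℝ) (p q : MvPolynomial (Fin n) ℝ) :
    Dop n κ (p + q) = Dop n κ p + Dop n κ q := by
  simp [Dop, add_mul, Finset.sum_add_distrib]

lemma Dop_mul_X (n : ℕ) (κ : Fin n → ℝ) (p : MvPolynomial (Fin n) ℝ) (i : Fin n) :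
    Dop n κ (p * X i) = Dop n κ p * X i + p * (X i ^ 2 + C (κ i)) := by
  classical
  have h1 : ∀ j : Fin n, pderiv j (p * X i) = pderiv j p * X i + p * (pderiv j (X i)) :=
    fun j => by rw [pderiv_mul]
  simp_rw [Dop, h1, add_mul, Finset.sum_add_distrib]
  congr 1
  · rw [Finset.sum_mul]; exact Finset.sum_congr rfl fun j _ => by ring
  · rw [Finset.sum_eq_single i]
    · rw [pderiv_X_self]; ring
    · intro b _ hb
      simp [pderiv_X_of_ne (Ne.symm hb)]
    · simp

lemma eval_hasDerivAt (n : ℕ) (κ : Fin n → ℝ) (μ : Fin n → ℝ → ℝ) (t : ℝ)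
    (hμ : ∀ i, HasDerivAt (μ i) ((μ i t) ^ 2 + κ i) t) (P : MvPolynomial (Fin n) ℝ) :
    HasDerivAt (fun s => MvPolynomial.eval (fun i => μ i s) P)
      (MvPolynomial.eval (fun i => μ i t) (Dop n κ P)) t := by
  induction P using MvPolynomial.induction_on with
  | C a =>
      simp only [eval_C, Dop_C, map_zero]
      exact hasDerivAt_const t a
  | add p q hp hq =>
      simp only [map_add, Dop_add]
      exact hp.add hq
  | mul_X p i hp =>
      have h := hp.fun_mul (hμ i)
      simp only [map_mul, eval_X, Dop_mul_X, map_add, map_mul, map_pow, eval_C, eval_X]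
      convert h using 1

lemma Dop_totalDegree (n : ℕ) (κ : Fin n → ℝ) (P : MvPolynomial (Fin n) ℝ) :
    (Dop n κ P).totalDegree ≤ P.totalDegree + 1 := by
  classical
  refine (totalDegree_finset_sum _ _).trans (Finset.sup_le fun i _ => ?_)
  have hf : (X i ^ 2 + C (κ i) : MvPolynomial (Fin n) ℝ).totalDegree ≤ 2 := by
    refine (totalDegree_add _ _).trans (max_le ?_ ?_)
    · exact (totalDegree_X_pow i 2).le
    · simp [totalDegree_C]
  -- expand pderiv i P as sum over monomials
  conv_lhs => rw [P.as_sum]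
  rw [map_sum, Finset.sum_mul]
  refine (totalDegree_finset_sum _ _).trans (Finset.sup_le fun m hm => ?_)
  rw [pderiv_monomial]
  by_cases hmi : m i = 0
  · simp [hmi]
  · refine (totalDegree_mul _ _).trans ?_
    have h1 : (monomial (m - Finsupp.single i 1) (coeff m P * (m i : ℝ))).totalDegree
        ≤ (m - Finsupp.single i 1).sum fun _ e => e := totalDegree_monomial_le _ _
    have hle : Finsupp.single i 1 ≤ m := by
      rw [Finsupp.single_le_iff]; omega
    have h2 : ((m - Finsupp.single i 1).sum fun _ e => e) + 1 = m.sum fun _ e => e := by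
      have := tsub_add_cancel_of_le hle
      calc ((m - Finsupp.single i 1).sum fun _ e => e) + 1
          = ((m - Finsupp.single i 1).sum fun _ e => e)
            + ((Finsupp.single i 1).sum fun _ e => e) := by
              rw [Finsupp.sum_single_index]; rfl
        _ = ((m - Finsupp.single i 1) + Finsupp.single i 1).sum fun _ e => e := by
              rw [Finsupp.sum_add_index' (fun _ => rfl) (fun _ _ _ => rfl)]
        _ = m.sum fun _ e => e := by rw [this]
    have h3 : (m.sum fun _ e => e) ≤ P.totalDegree := le_totalDegree hm
    omega

/-- For solutions `μᵢ` of the Riccati equations `μᵢ' = μᵢ² + κᵢ` on an open interval and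
any `k ≥ 1`, `j ≥ 1`, there is a polynomial `P̂` in `n` variables of total degree `< k+j`,
depending only on `κ, k, j, n`, with
`Q_k^{(j)}(t) = k(k+1)⋯(k+j−1)·(Q_{k+j}(t) + P̂(μ₁(t),…,μₙ(t)))`,
where `Q_l(t) = ∑ᵢ μᵢ(t)^l`. -/
theorem stmt6 (n : ℕ) (κ : Fin n → ℝ) (k j : ℕ) (hk : 1 ≤ k) (hj : 1 ≤ j) :
    ∃ P : MvPolynomial (Fin n) ℝ, P.totalDegree < k + j ∧
      ∀ (I : Set ℝ), IsOpen I → ∀ (μ : Fin n → ℝ → ℝ),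
        (∀ i, ∀ t ∈ I, HasDerivAt (μ i) ((μ i t) ^ 2 + κ i) t) →
        ∀ t ∈ I,
          iteratedDerivWithin j (fun s => ∑ i, μ i s ^ k) I t
            = (∏ r ∈ Finset.range j, ((k + r : ℕ) : ℝ)) *
              ((∑ i, μ i t ^ (k + j)) + MvPolynomial.eval (fun i => μ i t) P) := by
  induction j, hj using Nat.le_induction with
  | base =>
      refine ⟨∑ i, C (κ i) * X i ^ (k - 1), ?_, ?_⟩
      · refine lt_of_le_of_lt (totalDegree_finset_sum _ _) ?_
        refine lt_of_le_of_lt (Finset.sup_le fun i _ => ?_) (show k - 1 < k + 1 by omega)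
        refine (totalDegree_mul _ _).trans ?_
        simp [totalDegree_C, (totalDegree_X_pow i (k-1)).le]
      · intro I hI μ hμ t ht
        rw [iteratedDerivWithin_one,
            derivWithin_of_isOpen hI ht]
        have hd : HasDerivAt (fun s => ∑ i, μ i s ^ k)
            (∑ i, (k : ℝ) * μ i t ^ (k - 1) * (μ i t ^ 2 + κ i)) t :=
          HasDerivAt.fun_sum fun i _ => (hμ i t ht).pow k
        rw [hd.deriv]
        simp only [Finset.range_one, Finset.prod_singleton, Nat.add_zero, Nat.cast_ofNat,
          map_sum, map_mul, map_pow, eval_C, eval_X, Nat.cast_id]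
        rw [mul_add, Finset.mul_sum, Finset.mul_sum, ← Finset.sum_add_distrib]
        refine Finset.sum_congr rfl fun i _ => ?_
        have hpow : μ i t ^ (k - 1) * μ i t ^ 2 = μ i t ^ (k + 1) := by
          rw [← pow_add]; congr 1; omega
        calc (k : ℝ) * μ i t ^ (k - 1) * (μ i t ^ 2 + κ i)
            = (k : ℝ) * (μ i t ^ (k-1) * μ i t ^ 2) + (k:ℝ) * (κ i * μ i t ^ (k-1)) := by ring
          _ = (k:ℝ) * μ i t ^ (k+1) + (k:ℝ) * (κ i * μ i t ^ (k-1)) := by rw [hpow]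
          _ = _ := by ring
  | succ j hj1 IH =>
      obtain ⟨P, hPdeg, hP⟩ := IH
      have hkj : (((k + j : ℕ) : ℝ)) ≠ 0 := by positivity
      refine ⟨(∑ i, C (κ i) * X i ^ (k + j - 1)) + C (((k + j : ℕ) : ℝ))⁻¹ * Dop n κ P,
        ?_, ?_⟩
      · refine lt_of_le_of_lt (totalDegree_add _ _) (max_lt ?_ ?_)
        · refine lt_of_le_of_lt (totalDegree_finset_sum _ _) ?_
          refine lt_of_le_of_lt (Finset.sup_le fun i _ => ?_)
            (show k + j - 1 < k + (j+1) by omega)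
          refine (totalDegree_mul _ _).trans ?_
          simp [totalDegree_C, (totalDegree_X_pow i (k+j-1)).le]
        · refine lt_of_le_of_lt (totalDegree_mul _ _) ?_
          have := Dop_totalDegree n κ P
          have hC : (C (((k + j : ℕ) : ℝ))⁻¹ : MvPolynomial (Fin n) ℝ).totalDegree = 0 :=
            totalDegree_C _
          omega
      · intro I hI μ hμ t ht
        rw [iteratedDerivWithin_succ,
            derivWithin_of_isOpen hI ht]
        set c : ℝ := ∏ r ∈ Finset.range j, ((k + r : ℕ) : ℝ) with hc
        -- the j-th derivative agrees with a nice function near t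
        have hcongr : deriv (iteratedDerivWithin j (fun s => ∑ i, μ i s ^ k) I) t
            = deriv (fun s => c * ((∑ i, μ i s ^ (k + j))
                + MvPolynomial.eval (fun i => μ i s) P)) t := by
          apply Filter.EventuallyEq.deriv_eq
          filter_upwards [hI.mem_nhds ht] with s hs
          exact hP I hI μ hμ s hs
        rw [hcongr]
        have hd1 : HasDerivAt (fun s => ∑ i, μ i s ^ (k + j))
            (∑ i, ((k+j : ℕ) : ℝ) * μ i t ^ (k + j - 1) * (μ i t ^ 2 + κ i)) t :=
          HasDerivAt.fun_sum fun i _ => (hμ i t ht).pow (k+j)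
        have hd2 := eval_hasDerivAt n κ μ t (fun i => hμ i t ht) P
        have hd : HasDerivAt (fun s => c * ((∑ i, μ i s ^ (k + j))
            + MvPolynomial.eval (fun i => μ i s) P))
            (c * ((∑ i, ((k+j : ℕ) : ℝ) * μ i t ^ (k + j - 1) * (μ i t ^ 2 + κ i))
              + MvPolynomial.eval (fun i => μ i t) (Dop n κ P))) t :=
          ((hd1.add hd2).const_mul c)
        rw [hd.deriv]
        rw [Finset.prod_range_succ]
        simp only [map_add, map_sum, map_mul, map_pow, eval_C, eval_X]
        have hsum : (∑ i, ((k+j : ℕ) : ℝ) * μ i t ^ (k + j - 1) * (μ i t ^ 2 + κ i))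
            = ((k+j : ℕ) : ℝ) * ((∑ i, μ i t ^ (k + (j+1)))
              + ∑ i, κ i * μ i t ^ (k + j - 1)) := by
          rw [mul_add, Finset.mul_sum, Finset.mul_sum, ← Finset.sum_add_distrib]
          refine Finset.sum_congr rfl fun i _ => ?_
          have hpow : μ i t ^ (k + j - 1) * μ i t ^ 2 = μ i t ^ (k + (j+1)) := by
            rw [← pow_add]; congr 1; omega
          calc ((k+j:ℕ) : ℝ) * μ i t ^ (k+j-1) * (μ i t ^ 2 + κ i)
              = ((k+j:ℕ):ℝ) * (μ i t ^ (k+j-1) * μ i t ^ 2)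
                + ((k+j:ℕ):ℝ) * (κ i * μ i t ^ (k+j-1)) := by ring
            _ = _ := by rw [hpow]
        rw [hsum]
        set S := ∑ i, μ i t ^ (k + (j+1)) with hS
        set T := ∑ i, κ i * μ i t ^ (k + j - 1) with hT
        set E := (eval fun i => μ i t) (Dop n κ P) with hE
        linear_combination (-(c*E)) * mul_inv_cancel₀ hkj
end

section
/- Let μ_i : I → R (i = 1,...,n) be solutions of μ_i'(t) = μ_i(t)^2 + κ_i with constants κ_i on an open interval I. If for some k ≥ 1 the power sum Q_k(t) = ∑_i μ_i(t)^k is constant in t on I, then each μ_i is constant on I. -/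
open Complex Filter Set Topology


/-- For each κ, x, t₀ there is an entire solution `u` of `u'' = -κ u` with `u t₀ = 1`,
`u' t₀ = -x`, having only simple zeros, and zero-free only if `x² + κ = 0`. -/
lemma riccati_exists_u (κ x t₀ : ℝ) :
    ∃ u du : ℂ → ℂ,
      (∀ z, HasDerivAt u (du z) z) ∧
      (∀ z, HasDerivAt du (-(κ : ℂ) * u z) z) ∧
      u t₀ = 1 ∧ du t₀ = -(x : ℂ) ∧
      (∀ p, u p = 0 → du p ≠ 0) ∧
      ((∀ p, u p ≠ 0) → x ^ 2 + κ = 0) := by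
  by_cases hκ : κ = 0
  · refine ⟨fun z => 1 - x * (z - t₀), fun _ => -(x : ℂ), ?_, ?_, by simp, rfl, ?_, ?_⟩
    · intro z
      simpa using (((hasDerivAt_id z).sub_const (t₀ : ℂ)).const_mul (x : ℂ)).const_sub 1
    · intro z; simp [hκ, hasDerivAt_const]
    · intro p hp hd
      have hx0 : (x : ℂ) = 0 := by simpa using hd
      rw [hx0] at hp; simp at hp
    · intro h
      have hx : x = 0 := by
        by_contra hx
        have : (x : ℂ) ≠ 0 := by exact_mod_cast hx
        apply h ((t₀ + 1 / x : ℝ) : ℂ)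
        push_cast
        field_simp
        ring
      rw [hx, hκ]; ring
  · obtain ⟨ω, hω⟩ := IsAlgClosed.exists_pow_nat_eq (-(κ : ℂ)) (n := 2) (by norm_num)
    have hω0 : ω ≠ 0 := by
      intro h; rw [h] at hω; simp at hω
      exact hκ (by exact_mod_cast hω)
    set α : ℂ := (1 - x / ω) / 2 with hα
    set β : ℂ := (1 + x / ω) / 2 with hβ
    set E : ℂ → ℂ := fun z => Complex.exp (ω * (z - t₀)) with hE
    set F : ℂ → ℂ := fun z => Complex.exp (-(ω * (z - t₀))) with hF
    have hEd : ∀ z, HasDerivAt E (ω * E z) z := by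
      intro z
      have h1 : HasDerivAt (fun z : ℂ => ω * (z - t₀)) ω z := by
        simpa using ((hasDerivAt_id z).sub_const (t₀ : ℂ)).const_mul ω
      exact h1.cexp.congr_deriv (by simp only [hE]; ring)
    have hFd : ∀ z, HasDerivAt F (-ω * F z) z := by
      intro z
      have h1 : HasDerivAt (fun z : ℂ => -(ω * (z - t₀))) (-ω) z := by
        simpa using (((hasDerivAt_id z).sub_const (t₀ : ℂ)).const_mul ω).fun_neg
      exact h1.cexp.congr_deriv (by simp only [hF]; ring)
    have hEne : ∀ z, E z ≠ 0 := fun z => Complex.exp_ne_zero _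
    have hFne : ∀ z, F z ≠ 0 := fun z => Complex.exp_ne_zero _
    have hE0 : E t₀ = 1 := by simp [hE]
    have hF0 : F t₀ = 1 := by simp [hF]
    refine ⟨fun z => α * E z + β * F z, fun z => ω * α * E z - ω * β * F z, ?_, ?_, ?_, ?_, ?_, ?_⟩
    · intro z
      have := ((hEd z).const_mul α).fun_add ((hFd z).const_mul β)
      exact this.congr_deriv (by ring)
    · intro z
      have := ((hEd z).const_mul (ω * α)).fun_sub ((hFd z).const_mul (ω * β))
      exact this.congr_deriv (by rw [← hω]; ring)
    · show α * E t₀ + β * F t₀ = 1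
      rw [hE0, hF0, hα, hβ]; ring
    · show ω * α * E t₀ - ω * β * F t₀ = -(x : ℂ)
      rw [hE0, hF0, hα, hβ]; field_simp; ring
    · intro p hp hd
      rw [show (fun z => α * E z + β * F z) p = α * E p + β * F p from rfl] at hp
      rw [show (fun z => ω * α * E z - ω * β * F z) p = ω * α * E p - ω * β * F p from rfl] at hd
      have h1 : α * E p = 0 := by
        have h2 : ω * (α * E p + β * F p) + (ω * α * E p - ω * β * F p) = 0 := by
          rw [hp, hd]; ring
        have h3 : (2 * ω) * (α * E p) = 0 := by linear_combination h2
        rcases mul_eq_zero.mp h3 with h | h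
        · exact absurd h (by simp [hω0])
        · exact h
      have hα0 : α = 0 := by
        rcases mul_eq_zero.mp h1 with h | h
        · exact h
        · exact absurd h (hEne p)
      have hβ0 : β = 0 := by
        have : β * F p = 0 := by rw [← hp, hα0]; ring
        rcases mul_eq_zero.mp this with h | h
        · exact h
        · exact absurd h (hFne p)
      have : α * E t₀ + β * F t₀ = (0 : ℂ) := by rw [hα0, hβ0]; ring
      rw [hE0, hF0, hα0, hβ0] at this
      have h1 : α + β = 1 := by rw [hα, hβ]; ring
      rw [hα0, hβ0] at h1; norm_num at h1
    · intro h
      by_cases hA : α = 0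
      · have h2 : ((1 : ℂ) - x / ω) / 2 = 0 := by rw [← hα]; exact hA
        have hxω : (x : ℂ) = ω := by
          field_simp at h2; linear_combination -h2
        have hC : ((x ^ 2 + κ : ℝ) : ℂ) = 0 := by
          push_cast; rw [hxω]; linear_combination hω
        exact_mod_cast hC
      · by_cases hB : β = 0
        · have h2 : ((1 : ℂ) + x / ω) / 2 = 0 := by rw [← hβ]; exact hB
          have hxω : (x : ℂ) = -ω := by
            field_simp at h2; linear_combination h2
          have hC : ((x ^ 2 + κ : ℝ) : ℂ) = 0 := by
            push_cast; rw [hxω]; linear_combination hω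
          exact_mod_cast hC
        · exfalso
          set L : ℂ := Complex.log (-β / α) with hL
          have hba : (-β / α : ℂ) ≠ 0 := div_ne_zero (neg_ne_zero.mpr hB) hA
          have hexpL : Complex.exp L = -β / α := Complex.exp_log hba
          set p : ℂ := (t₀ : ℂ) + L / (2 * ω) with hp
          apply h p
          have hωp : ω * (p - t₀) = L / 2 := by
            rw [hp]; field_simp; ring
          have hEp : E p = Complex.exp (L / 2) := by simp only [hE]; rw [hωp]
          have hFp : F p = Complex.exp (-(L / 2)) := by simp only [hF]; rw [hωp]
          have key : Complex.exp (L / 2) * (α * E p + β * F p) = 0 := by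
            rw [hEp, hFp]
            have e1 : Complex.exp (L / 2) * Complex.exp (L / 2) = Complex.exp L := by
              rw [← Complex.exp_add]; ring_nf
            have e2 : Complex.exp (L / 2) * Complex.exp (-(L / 2)) = 1 := by
              rw [← Complex.exp_add]; simp
            calc Complex.exp (L / 2) * (α * Complex.exp (L / 2) + β * Complex.exp (-(L / 2)))
                = α * (Complex.exp (L / 2) * Complex.exp (L / 2))
                  + β * (Complex.exp (L / 2) * Complex.exp (-(L / 2))) := by ring
              _ = α * (-β / α) + β * 1 := by rw [e1, e2, hexpL]
              _ = 0 := by field_simp; ring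
          rcases mul_eq_zero.mp key with hc | hc
          · exact absurd hc (Complex.exp_ne_zero _)
          · exact hc


/-- A complex-valued solution of the scalar linear ODE `f' = g f` on an interval,
vanishing at one point, vanishes identically. -/
lemma linear_ode_zero {I : Set ℝ} (hconn : I.OrdConnected)
    (f : ℝ → ℂ) (g : ℝ → ℝ)
    (hg : ContinuousOn g I)
    (hf : ∀ t ∈ I, HasDerivAt f ((g t : ℂ) * f t) t)
    {t₀ : ℝ} (ht₀ : t₀ ∈ I) (h0 : f t₀ = 0) : ∀ t ∈ I, f t = 0 := by
  intro t ht
  rcases le_total t₀ t with hle | hle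
  · -- forward
    have hJ : Icc t₀ t ⊆ I := hconn.out ht₀ ht
    obtain ⟨K, hK⟩ := (isCompact_Icc (a := t₀) (b := t)).exists_bound_of_continuousOn
      (hg.mono hJ)
    set K' : NNReal := ⟨max K 0, le_max_right _ _⟩ with hK'
    set v : ℝ → ℂ → ℂ := fun s y => if s ∈ Icc t₀ t then (g s : ℂ) * y else 0 with hv
    have hlip : ∀ s : ℝ, LipschitzOnWith K' (v s) univ := by
      intro s
      by_cases hs : s ∈ Icc t₀ t
      · have hveq : v s = fun y => (g s : ℂ) * y := by funext y; simp only [hv]; rw [if_pos hs]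
        rw [hveq]
        apply LipschitzWith.lipschitzOnWith
        apply LipschitzWith.of_dist_le_mul
        intro x y
        rw [dist_eq_norm, dist_eq_norm, ← mul_sub, norm_mul]
        apply mul_le_mul_of_nonneg_right _ (norm_nonneg _)
        calc ‖((g s : ℝ) : ℂ)‖ = ‖g s‖ := Complex.norm_real _
          _ ≤ K := hK s hs
          _ ≤ max K 0 := le_max_left _ _
      · have hveq : v s = fun _ => (0 : ℂ) := by funext y; simp only [hv]; rw [if_neg hs]
        rw [hveq]
        exact ((LipschitzWith.const (0 : ℂ)).weaken zero_le).lipschitzOnWith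
    have := ODE_solution_unique_of_mem_Icc_right (v := v) (s := fun _ => univ) (fun s _ => hlip s)
      (f := f) (g := fun _ => (0 : ℂ)) (a := t₀) (b := t)
      (fun s hs => ((hf s (hJ hs)).continuousAt).continuousWithinAt)
      (fun s hs => by
        have h1 := ((hf s (hJ (Ico_subset_Icc_self hs))).hasDerivWithinAt (s := Ici s))
        have h2 : v s (f s) = (g s : ℂ) * f s := by simp only [hv]; rw [if_pos (Ico_subset_Icc_self hs)]
        rw [h2]; exact h1)
      (fun _ _ => mem_univ _)
      continuousOn_const
      (fun s hs => by
        have h2 : v s (0 : ℂ) = 0 := by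
          by_cases h : s ∈ Icc t₀ t
          · simp only [hv]; rw [if_pos h, mul_zero]
          · simp only [hv]; rw [if_neg h]
        rw [h2]; exact (hasDerivWithinAt_const _ _ _))
      (fun _ _ => mem_univ _)
      (by simpa using h0)
    exact this ⟨hle, le_refl t⟩
  · -- backward
    have hJ : Icc t t₀ ⊆ I := hconn.out ht ht₀
    obtain ⟨K, hK⟩ := (isCompact_Icc (a := t) (b := t₀)).exists_bound_of_continuousOn
      (hg.mono hJ)
    set K' : NNReal := ⟨max K 0, le_max_right _ _⟩ with hK'
    set v : ℝ → ℂ → ℂ := fun s y => if s ∈ Icc t t₀ then (g s : ℂ) * y else 0 with hv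
    have hlip : ∀ s : ℝ, LipschitzOnWith K' (v s) univ := by
      intro s
      by_cases hs : s ∈ Icc t t₀
      · have hveq : v s = fun y => (g s : ℂ) * y := by funext y; simp only [hv]; rw [if_pos hs]
        rw [hveq]
        apply LipschitzWith.lipschitzOnWith
        apply LipschitzWith.of_dist_le_mul
        intro x y
        rw [dist_eq_norm, dist_eq_norm, ← mul_sub, norm_mul]
        apply mul_le_mul_of_nonneg_right _ (norm_nonneg _)
        calc ‖((g s : ℝ) : ℂ)‖ = ‖g s‖ := Complex.norm_real _
          _ ≤ K := hK s hs
          _ ≤ max K 0 := le_max_left _ _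
      · have hveq : v s = fun _ => (0 : ℂ) := by funext y; simp only [hv]; rw [if_neg hs]
        rw [hveq]
        exact ((LipschitzWith.const (0 : ℂ)).weaken zero_le).lipschitzOnWith
    have := ODE_solution_unique_of_mem_Icc_left (v := v) (s := fun _ => univ) (fun s _ => hlip s)
      (f := f) (g := fun _ => (0 : ℂ)) (a := t) (b := t₀)
      (fun s hs => ((hf s (hJ hs)).continuousAt).continuousWithinAt)
      (fun s hs => by
        have h1 := ((hf s (hJ (Ioc_subset_Icc_self hs))).hasDerivWithinAt (s := Iic s))
        have h2 : v s (f s) = (g s : ℂ) * f s := by simp only [hv]; rw [if_pos (Ioc_subset_Icc_self hs)]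
        rw [h2]; exact h1)
      (fun _ _ => mem_univ _)
      continuousOn_const
      (fun s hs => by
        have h2 : v s (0 : ℂ) = 0 := by
          by_cases h : s ∈ Icc t t₀
          · simp only [hv]; rw [if_pos h, mul_zero]
          · simp only [hv]; rw [if_neg h]
        rw [h2]; exact (hasDerivWithinAt_const _ _ _))
      (fun _ _ => mem_univ _)
      (by simpa using h0)
    exact this ⟨le_refl t, hle⟩


lemma riccati_point (n : ℕ) (I : Set ℝ) (hI : IsOpen I) (hconn : I.OrdConnected)
    (μ : Fin n → ℝ → ℝ) (κ : Fin n → ℝ)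
    (hode : ∀ i, ∀ t ∈ I, HasDerivAt (μ i) ((μ i t) ^ 2 + κ i) t)
    (k : ℕ) (hk : 1 ≤ k)
    (hQ : ∀ t ∈ I, ∀ s ∈ I, ∑ i, μ i t ^ k = ∑ i, μ i s ^ k)
    {t₀ : ℝ} (ht₀ : t₀ ∈ I) (i : Fin n) : μ i t₀ ^ 2 + κ i = 0 := by
  classical
  choose u du hu hdu hu1 hdux hsimple hfree using
    fun j : Fin n => riccati_exists_u (κ j) (μ j t₀) t₀
  have hk0 : k ≠ 0 := by omega
  have hcont : ∀ j, ContinuousOn (μ j) I := fun j s hs =>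
    ((hode j s hs).continuousAt).continuousWithinAt
  -- Step B : du j = -μ j · u j on I
  have hlin : ∀ j, ∀ t ∈ I, du j t = -((μ j t : ℂ)) * u j t := by
    intro j
    set f : ℝ → ℂ := fun s => du j s + (μ j s : ℂ) * u j s with hfdef
    have hf0 : f t₀ = 0 := by simp [hfdef, hu1 j, hdux j]
    have hfd : ∀ s ∈ I, HasDerivAt f ((μ j s : ℂ) * f s) s := by
      intro s hs
      have h1 : HasDerivAt (fun r : ℝ => u j r) (du j s) s := (hu j s).comp_ofReal
      have h2 : HasDerivAt (fun r : ℝ => du j r) (-(κ j : ℂ) * u j s) s :=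
        (hdu j s).comp_ofReal
      have h3 : HasDerivAt (fun r : ℝ => ((μ j r : ℝ) : ℂ)) ((μ j s ^ 2 + κ j : ℝ) : ℂ) s :=
        (hode j s hs).ofReal_comp
      have h4 := h2.add (h3.mul h1)
      have heq : -(κ j : ℂ) * u j s + (((μ j s ^ 2 + κ j : ℝ) : ℂ) * u j s
          + (μ j s : ℂ) * du j s) = (μ j s : ℂ) * f s := by
        simp only [hfdef]; push_cast; ring
      exact heq ▸ h4
    intro t ht
    have := linear_ode_zero hconn f (μ j) (hcont j) hfd ht₀ hf0 t ht
    simp only [hfdef] at this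
    linear_combination this
  -- the entire function G
  set C : ℂ := ∑ j, ((μ j t₀ : ℂ)) ^ k with hCdef
  set P : ℂ → ℂ := fun z => ∏ j, (u j z) ^ k with hPdef
  set G : ℂ → ℂ := fun z =>
    (∑ j, (-(du j z)) ^ k * ∏ m ∈ Finset.univ.erase j, (u m z) ^ k) - C * P z with hGdef
  have hud : ∀ j, Differentiable ℂ (u j) := fun j z => (hu j z).differentiableAt
  have hdud : ∀ j, Differentiable ℂ (du j) := fun j z => (hdu j z).differentiableAt
  have hGdiff : Differentiable ℂ G := by
    rw [hGdef]
    apply Differentiable.sub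
    · apply Differentiable.fun_sum
      intro j _
      exact (((hdud j).neg).pow k).mul
        (Differentiable.fun_finsetProd fun m _ => (hud m).pow k)
    · exact (differentiable_const C).mul
        ((Differentiable.fun_finsetProd fun m _ => (hud m).pow k))
  have hG0 : ∀ t ∈ I, G ((t : ℝ) : ℂ) = 0 := by
    intro t ht
    have hsum : ∀ j : Fin n, (-(du j t)) ^ k * ∏ m ∈ Finset.univ.erase j, (u m t) ^ k
        = ((μ j t : ℂ)) ^ k * P t := by
      intro j
      rw [hlin j t ht]
      have h1 : (-(-((μ j t : ℝ) : ℂ) * u j t)) = (μ j t : ℂ) * u j t := by ring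
      rw [h1, mul_pow, mul_assoc]
      congr 1
      exact Finset.mul_prod_erase Finset.univ (fun m => u m t ^ k) (Finset.mem_univ j)
    have hC : (∑ j, ((μ j t : ℂ)) ^ k) = C := by
      rw [hCdef]
      have := congrArg (fun r : ℝ => (r : ℂ)) (hQ t ht t₀ ht₀)
      push_cast at this
      exact this
    simp only [hGdef]
    rw [Finset.sum_congr rfl fun j _ => hsum j, ← Finset.sum_mul, hC]
    ring
  have hGz : ∀ z : ℂ, G z = 0 := by
    obtain ⟨δ, hδ, hball⟩ := Metric.isOpen_iff.mp hI t₀ ht₀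
    have hA : AnalyticOnNhd ℂ G univ := hGdiff.differentiableOn.analyticOnNhd isOpen_univ
    have hseq : Tendsto (fun m : ℕ => ((t₀ + δ / (m + 2) : ℝ) : ℂ)) atTop (𝓝[≠] (t₀ : ℂ)) := by
      rw [tendsto_nhdsWithin_iff]
      constructor
      · have h2 : Tendsto (fun m : ℕ => ((m : ℝ) + 2)) atTop atTop :=
          tendsto_atTop_add_const_right _ 2 tendsto_natCast_atTop_atTop
        have h3 : Tendsto (fun m : ℕ => δ / ((m : ℝ) + 2)) atTop (𝓝 0) :=
          Tendsto.div_atTop tendsto_const_nhds h2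
        have h1 : Tendsto (fun m : ℕ => (t₀ + δ / ((m : ℝ) + 2) : ℝ)) atTop (𝓝 t₀) := by
          simpa using tendsto_const_nhds.add h3
        have := (Complex.continuous_ofReal.tendsto t₀).comp h1
        convert this using 2
        all_goals (push_cast [Function.comp_apply]; ring)
      · filter_upwards with m
        simp only [mem_compl_iff, mem_singleton_iff]
        intro hc
        have hc2 : (t₀ + δ / ((m : ℕ) + 2) : ℝ) = t₀ := by exact_mod_cast hc
        have h2 : δ / ((m : ℝ) + 2) > 0 := div_pos hδ (by positivity)
        push_cast at hc2
        linarith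
    have hmem : ∀ m : ℕ, (t₀ + δ / ((m : ℝ) + 2) : ℝ) ∈ I := by
      intro m
      apply hball
      rw [Metric.mem_ball, Real.dist_eq]
      have h2 : δ / ((m : ℝ) + 2) > 0 := div_pos hδ (by positivity)
      have h3 : δ / ((m : ℝ) + 2) < δ := by
        rw [div_lt_iff₀ (by positivity)]
        nlinarith
      rw [show t₀ + δ / ((m : ℝ) + 2) - t₀ = δ / ((m : ℝ) + 2) by ring, abs_of_pos h2]
      exact h3
    have hfreq : ∃ᶠ z in 𝓝[≠] (t₀ : ℂ), G z = 0 := by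
      apply hseq.frequently
      apply Frequently.of_forall
      intro m
      have := hG0 _ (hmem m)
      convert this using 2
      all_goals (push_cast; ring)
    have := hA.eqOn_zero_of_preconnected_of_frequently_eq_zero isPreconnected_univ
      (mem_univ ((t₀ : ℝ) : ℂ)) hfreq
    intro z
    exact this (mem_univ z)
  -- contradiction if μ i t₀ ^ 2 + κ i ≠ 0
  by_contra hne0
  have hzero : ∃ p, u i p = 0 := by
    by_contra hno
    push_neg at hno
    exact hne0 (hfree i hno)
  obtain ⟨p, hp⟩ := hzero
  set A : Finset (Fin n) := Finset.univ.filter (fun j => u j p = 0) with hAdef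
  have hiA : i ∈ A := by simp [hAdef, hp]
  have hslope : ∀ j ∈ A, Tendsto (fun z => u j z / (z - p)) (𝓝[≠] p) (𝓝 (du j p)) := by
    intro j hj
    have hjp : u j p = 0 := by simpa [hAdef] using hj
    have h1 := hasDerivAt_iff_tendsto_slope.mp (hu j p)
    have heq : ∀ z, slope (u j) p z = u j z / (z - p) := fun z => by
      rw [slope_def_field, hjp, sub_zero]
    exact h1.congr heq
  have hznp : Tendsto (fun z : ℂ => z - p) (𝓝[≠] p) (𝓝 0) := by
    have h1 : Tendsto (fun z : ℂ => z - p) (𝓝 p) (𝓝 (p - p)) :=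
      (continuous_sub_right p).tendsto p
    simpa using h1.mono_left nhdsWithin_le_nhds
  have hterm : ∀ j : Fin n, Tendsto (fun z => ((z - p) * (-(du j z)) / u j z) ^ k) (𝓝[≠] p)
      (𝓝 (if j ∈ A then (-1 : ℂ) ^ k else 0)) := by
    intro j
    by_cases hjA : j ∈ A
    · rw [if_pos hjA]
      have hjp : u j p = 0 := by simpa [hAdef] using hjA
      have hdjp : du j p ≠ 0 := hsimple j p hjp
      have h1 : Tendsto (fun z => -(du j z)) (𝓝[≠] p) (𝓝 (-(du j p))) :=
        (((hdud j) p).continuousAt.tendsto.mono_left nhdsWithin_le_nhds).neg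
      have h2 : Tendsto (fun z => (u j z / (z - p))⁻¹) (𝓝[≠] p) (𝓝 (du j p)⁻¹) :=
        (hslope j hjA).inv₀ hdjp
      have h3 := h1.mul h2
      have hval : -(du j p) * (du j p)⁻¹ = -1 := by field_simp
      rw [hval] at h3
      have h4 := h3.pow k
      exact h4.congr fun z => by rw [inv_div]; ring
    · rw [if_neg hjA]
      have hjp : u j p ≠ 0 := by simpa [hAdef] using hjA
      have h1 : Tendsto (fun z => (z - p) * (-(du j z))) (𝓝[≠] p) (𝓝 (0 * -(du j p))) :=
        hznp.mul ((((hdud j) p).continuousAt.tendsto.mono_left nhdsWithin_le_nhds).neg)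
      have h2 : Tendsto (fun z => u j z) (𝓝[≠] p) (𝓝 (u j p)) :=
        ((hud j) p).continuousAt.tendsto.mono_left nhdsWithin_le_nhds
      have h3 := (h1.div h2 hjp).pow k
      have hval : ((0 : ℂ) * -(du j p) / u j p) ^ k = 0 := by
        rw [zero_mul, zero_div, zero_pow hk0]
      rwa [hval] at h3
  have hsumlim : Tendsto (fun z => ∑ j, ((z - p) * (-(du j z)) / u j z) ^ k) (𝓝[≠] p)
      (𝓝 (∑ j, if j ∈ A then (-1 : ℂ) ^ k else 0)) :=
    tendsto_finset_sum _ fun j _ => hterm j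
  have hsumval : (∑ j, if j ∈ A then (-1 : ℂ) ^ k else 0) = (A.card : ℂ) * (-1) ^ k := by
    rw [Finset.sum_ite_mem, Finset.univ_inter, Finset.sum_const, nsmul_eq_mul]
  have hev : ∀ᶠ z in 𝓝[≠] p, ∀ j, u j z ≠ 0 := by
    rw [eventually_all]
    intro j
    by_cases hjA : j ∈ A
    · have h2 := (hslope j hjA).eventually_ne (hsimple j p (by simpa [hAdef] using hjA))
      filter_upwards [h2] with z hz
      intro hc
      apply hz
      rw [hc, zero_div]
    · have hjp : u j p ≠ 0 := by simpa [hAdef] using hjA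
      exact (((hud j) p).continuousAt.tendsto.mono_left nhdsWithin_le_nhds).eventually_ne hjp
  have heq2 : (fun z => ∑ j, ((z - p) * (-(du j z)) / u j z) ^ k)
      =ᶠ[𝓝[≠] p] (fun z => (z - p) ^ k * C) := by
    filter_upwards [hev] with z hz
    have hPz : P z ≠ 0 := by
      rw [hPdef]
      exact Finset.prod_ne_zero_iff.mpr fun m _ => pow_ne_zero _ (hz m)
    have hS : (∑ j, (-(du j z)) ^ k * ∏ m ∈ Finset.univ.erase j, (u m z) ^ k) = C * P z := by
      have hGzz := hGz z
      simp only [hGdef] at hGzz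
      linear_combination hGzz
    have hterm2 : ∀ j : Fin n, ((z - p) * (-(du j z)) / u j z) ^ k
        = (z - p) ^ k * ((-(du j z)) ^ k * ∏ m ∈ Finset.univ.erase j, (u m z) ^ k) / P z := by
      intro j
      rw [eq_div_iff hPz]
      have hP2 : P z = u j z ^ k * ∏ m ∈ Finset.univ.erase j, (u m z) ^ k := by
        rw [hPdef]
        exact (Finset.mul_prod_erase Finset.univ (fun m => u m z ^ k)
          (Finset.mem_univ j)).symm
      rw [hP2, div_pow, mul_pow]
      have hujk : u j z ^ k ≠ 0 := pow_ne_zero _ (hz j)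
      field_simp
    calc (∑ j, ((z - p) * (-(du j z)) / u j z) ^ k)
        = ∑ j, (z - p) ^ k * ((-(du j z)) ^ k * ∏ m ∈ Finset.univ.erase j, (u m z) ^ k) / P z :=
          Finset.sum_congr rfl fun j _ => hterm2 j
      _ = (z - p) ^ k * (∑ j, (-(du j z)) ^ k * ∏ m ∈ Finset.univ.erase j, (u m z) ^ k) / P z := by
          rw [← Finset.sum_div, ← Finset.mul_sum]
      _ = (z - p) ^ k * (C * P z) / P z := by rw [hS]
      _ = (z - p) ^ k * C := by
          field_simp
  have hRlim : Tendsto (fun z : ℂ => (z - p) ^ k * C) (𝓝[≠] p) (𝓝 0) := by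
    have := (hznp.pow k).mul_const C
    simpa [zero_pow hk0] using this
  have hfinal := tendsto_nhds_unique (hsumlim.congr' heq2) hRlim
  rw [hsumval] at hfinal
  have h1 : ((-1 : ℂ)) ^ k ≠ 0 := pow_ne_zero _ (by norm_num)
  have h2 : (A.card : ℂ) = 0 := by
    rcases mul_eq_zero.mp hfinal with h | h
    · exact h
    · exact absurd h h1
  have h3 : A.card = 0 := by exact_mod_cast h2
  exact absurd h3 (Finset.card_ne_zero_of_mem hiA)

/-- If `μ₁, …, μₙ` solve the Riccati equations `μᵢ' = μᵢ² + κᵢ` on a connected open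
interval `I`, and for some `k ≥ 1` the power sum `Q_k(t) = ∑ᵢ μᵢ(t)^k` is constant on `I`,
then each `μᵢ` is constant on `I`. -/
theorem stmt7 (n : ℕ) (I : Set ℝ) (hI : IsOpen I) (hconn : I.OrdConnected)
    (μ : Fin n → ℝ → ℝ) (κ : Fin n → ℝ)
    (hode : ∀ i, ∀ t ∈ I, HasDerivAt (μ i) ((μ i t) ^ 2 + κ i) t)
    (k : ℕ) (hk : 1 ≤ k)
    (hQ : ∀ t ∈ I, ∀ s ∈ I, ∑ i, μ i t ^ k = ∑ i, μ i s ^ k) :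
    ∀ i, ∀ t ∈ I, ∀ s ∈ I, μ i t = μ i s := by
  intro i t ht s hs
  have hder : ∀ τ ∈ I, HasDerivAt (μ i) 0 τ := by
    intro τ hτ
    have h0 := riccati_point n I hI hconn μ κ hode k hk hQ hτ i
    have h1 := hode i τ hτ
    rwa [h0] at h1
  have hconv : Convex ℝ I := convex_iff_ordConnected.mpr hconn
  apply hconv.is_const_of_fderivWithin_eq_zero (𝕜 := ℝ)
    (fun x hx => ((hder x hx).differentiableAt).differentiableWithinAt) _ ht hs
  intro x hx
  rw [fderivWithin_of_isOpen hI hx, (hder x hx).hasFDerivAt.fderiv]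
  ext y
  simp
end

section
/- Let A be an n×n complex matrix and suppose that for all k in some set of n consecutive integers {m, m+1, ..., m+n−1} (m ≥ 1) and for a fixed vector of values (c_m,...,c_{m+n-1}), one has tr(A^k) = c_k. Then the multiset of eigenvalues of A is one of only finitely many possibilities (i.e., the set of possible characteristic polynomials is finite). -/
open Matrix Polynomial

namespace Stmt18Aux


lemma exists_enum {α : Type*} (s : Multiset α) (n : ℕ) (h : Multiset.card s = n) :
    ∃ v : Fin n → α, s = Multiset.map v Finset.univ.val := by
  induction s using Quotient.ind with
  | _ l =>
    simp only [Multiset.quot_mk_to_coe, Multiset.coe_card] at h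
    subst h
    exact ⟨l.get, by rw [Fin.univ_val_map, List.ofFn_get]; rfl⟩

lemma list_multiset_prod_comm {α β : Type*} (l : List β) (s : Multiset α) (F : α → β → ℂ) :
    (l.map (fun r => (s.map (fun a => F a r)).prod)).prod
      = (s.map (fun a => (l.map (fun r => F a r)).prod)).prod := by
  induction l with
  | nil => simp
  | cons r l ih =>
      simp only [List.map_cons, List.prod_cons, ih, ← Multiset.prod_map_mul]

lemma eval_charpoly {nn : ℕ} (M : Matrix (Fin nn) (Fin nn) ℂ) (r : ℂ) :
    M.charpoly.eval r = (Matrix.scalar (Fin nn) r - M).det := by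
  rw [Matrix.charpoly, _root_.eval_det, matPolyEquiv_charmatrix]
  simp



lemma power_sums_zero {n m : ℕ} (hm : 1 ≤ m) (v : Fin n → ℂ)
    (h : ∀ j : Fin n, ∑ i, v i ^ (m + (j : ℕ)) = 0) : v = 0 := by
  classical
  by_contra hv
  obtain ⟨i₀, hi₀⟩ : ∃ i₀, v i₀ ≠ 0 := by
    by_contra h'; push_neg at h'; exact hv (funext h')
  set s : Finset ℂ := (Finset.univ.image v).erase 0 with hs
  have hst : s.card ≤ n := by
    calc s.card ≤ (Finset.univ.image v).card := Finset.card_erase_le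
    _ ≤ (Finset.univ : Finset (Fin n)).card := Finset.card_image_le
    _ = n := by simp
  set t := s.card with htdef
  set w : Fin t → ℂ := fun a => (s.equivFin.symm a : ℂ) with hw
  have hw_mem : ∀ a, w a ∈ s := fun a => (s.equivFin.symm a).2
  have hw_inj : Function.Injective w :=
    Subtype.val_injective.comp s.equivFin.symm.injective
  have key : ∀ jj : ℕ, jj < n →
      ∑ x ∈ s, ((Finset.univ.filter (fun i => v i = x)).card : ℂ) * x ^ (m + jj) = 0 := by
    intro jj hjj
    have h0 := h ⟨jj, hjj⟩
    have hfib := Finset.sum_fiberwise_of_maps_to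
      (fun i (_ : i ∈ Finset.univ) => Finset.mem_image_of_mem v (Finset.mem_univ i))
      (fun i => v i ^ (m + jj))
    have hinner : ∀ x ∈ Finset.univ.image v,
        ∑ i ∈ Finset.univ.filter (fun i => v i = x), v i ^ (m + jj)
          = ((Finset.univ.filter (fun i => v i = x)).card : ℂ) * x ^ (m + jj) := by
      intro x _
      rw [Finset.sum_congr rfl (fun i hi => by
        rw [(Finset.mem_filter.1 hi).2]), Finset.sum_const, nsmul_eq_mul]
    have himg : ∑ x ∈ Finset.univ.image v,
        ((Finset.univ.filter (fun i => v i = x)).card : ℂ) * x ^ (m + jj) = 0 := by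
      rw [← Finset.sum_congr rfl hinner, hfib, h0]
    rw [← himg]
    exact (Finset.sum_erase (Finset.univ.image v)
      (f := fun x => ((Finset.univ.filter (fun i => v i = x)).card : ℂ) * x ^ (m + jj))
      (a := 0) (by simp [zero_pow (by omega : m + jj ≠ 0)]))
  have hzero : (fun a : Fin t => ((Finset.univ.filter (fun i => v i = w a)).card : ℂ) * w a ^ m)
      = 0 := by
    apply eq_zero_of_forall_pow_sum_mul_pow_eq_zero hw_inj
    intro i
    have hsum : ∑ a : Fin t,
        ((Finset.univ.filter (fun i' => v i' = w a)).card : ℂ) * w a ^ (m + (i : ℕ)) = 0 := by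
      have e1 : ∑ a : Fin t,
          ((Finset.univ.filter (fun i' => v i' = w a)).card : ℂ) * w a ^ (m + (i : ℕ))
          = ∑ x ∈ s, ((Finset.univ.filter (fun i' => v i' = x)).card : ℂ) * x ^ (m + (i : ℕ)) := by
        rw [← Finset.sum_coe_sort s
          (fun x => ((Finset.univ.filter (fun i' => v i' = x)).card : ℂ) * x ^ (m + (i : ℕ)))]
        exact Fintype.sum_equiv s.equivFin.symm _ _ (fun a => rfl)
      rw [e1]
      exact key (i : ℕ) (lt_of_lt_of_le i.isLt hst)
    calc ∑ a : Fin t, ((Finset.univ.filter (fun i' => v i' = w a)).card : ℂ) * w a ^ m * w a ^ (i : ℕ)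
        = ∑ a : Fin t, ((Finset.univ.filter (fun i' => v i' = w a)).card : ℂ) * w a ^ (m + (i : ℕ)) := by
          apply Finset.sum_congr rfl; intro a _; rw [pow_add, mul_assoc]
      _ = 0 := hsum
  -- contradiction: v i₀ gives a nonzero entry
  have hvmem : v i₀ ∈ s := Finset.mem_erase.2 ⟨hi₀, Finset.mem_image_of_mem v (Finset.mem_univ i₀)⟩
  set a₀ : Fin t := s.equivFin ⟨v i₀, hvmem⟩ with ha₀
  have hwa₀ : w a₀ = v i₀ := by simp [hw, ha₀]
  have := congrFun hzero a₀
  simp only [Pi.zero_apply, mul_eq_zero] at this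
  rcases this with h1 | h2
  · rw [Nat.cast_eq_zero, Finset.card_eq_zero, Finset.filter_eq_empty_iff] at h1
    exact h1 (Finset.mem_univ i₀) (by rw [hwa₀])
  · exact hi₀ (by simpa [hwa₀] using pow_eq_zero_iff (by omega : m ≠ 0) |>.1 h2)

section HC
open MvPolynomial


lemma homogeneousComponent_mul_homogeneous {σ : Type*} (g p : MvPolynomial σ ℂ) {e : ℕ}
    (hp : p.IsHomogeneous e) (d : ℕ) :
    homogeneousComponent d (g * p)
      = (if e ≤ d then homogeneousComponent (d - e) g else 0) * p := by
  conv_lhs => rw [← sum_homogeneousComponent g]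
  rw [Finset.sum_mul, map_sum]
  have hterm : ∀ k ∈ Finset.range (g.totalDegree + 1),
      homogeneousComponent d (homogeneousComponent k g * p)
        = if k = d - e ∧ e ≤ d then homogeneousComponent k g * p else 0 := by
    intro k _
    rw [homogeneousComponent_of_mem ((mem_homogeneousSubmodule _ _).2
      ((homogeneousComponent_isHomogeneous k g).mul hp))]
    by_cases hde : d = k + e
    · rw [if_pos hde, if_pos ⟨by omega, by omega⟩]
    · rw [if_neg hde, if_neg (by omega)]
  rw [Finset.sum_congr rfl hterm]
  by_cases he : e ≤ d
  · simp only [he, and_true]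
    rw [Finset.sum_ite_eq' (Finset.range (g.totalDegree + 1)) (d - e)
      (fun k => homogeneousComponent k g * p), if_true]
    by_cases hmem : d - e ∈ Finset.range (g.totalDegree + 1)
    · rw [if_pos hmem]
    · rw [if_neg hmem, homogeneousComponent_eq_zero, zero_mul]
      simp only [Finset.mem_range] at hmem; omega
  · simp [he]


end HC


lemma eval_charpoly' {nn : ℕ} (M : Matrix (Fin nn) (Fin nn) ℂ) (r : ℂ) :
    M.charpoly.eval r = (Matrix.scalar (Fin nn) r - M).det := by
  rw [Matrix.charpoly, _root_.eval_det, matPolyEquiv_charmatrix]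
  simp

lemma det_aeval {nn : ℕ} (M : Matrix (Fin nn) (Fin nn) ℂ) {p : Polynomial ℂ} (hp : p ≠ 0) :
    (Polynomial.aeval M p).det = (M.charpoly.roots.map (fun a => p.eval a)).prod := by
  have hcard : Multiset.card M.charpoly.roots = nn := by
    rw [splits_iff_card_roots.mp (IsAlgClosed.splits _),
      Matrix.charpoly_natDegree_eq_dim, Fintype.card_fin]
  have hchar : M.charpoly = (M.charpoly.roots.map (fun a => X - C a)).prod :=
    (IsAlgClosed.splits _).eq_prod_roots_of_monic M.charpoly_monic
  have hdet1 : ∀ r : ℂ, (M - algebraMap ℂ (Matrix (Fin nn) (Fin nn) ℂ) r).det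
      = (M.charpoly.roots.map (fun a => a - r)).prod := by
    intro r
    have h1 : M.charpoly.eval r = (M.charpoly.roots.map (fun a => r - a)).prod := by
      conv_lhs => rw [hchar]
      rw [eval_multiset_prod, Multiset.map_map]
      simp [Function.comp]
    have h2 : (M - algebraMap ℂ (Matrix (Fin nn) (Fin nn) ℂ) r)
        = -(Matrix.scalar (Fin nn) r - M) := by
      rw [neg_sub]; congr 1
    rw [h2, Matrix.det_neg, ← eval_charpoly', h1, Fintype.card_fin]
    have h3 : (M.charpoly.roots.map (fun a => a - r))
        = (M.charpoly.roots.map (fun a => r - a)).map (fun x => -x) := by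
      rw [Multiset.map_map]; simp [Function.comp]
    rw [h3]
    have h4 : ((M.charpoly.roots.map (fun a => r - a)).map (fun x => -x)).prod
        = (-1) ^ (Multiset.card (M.charpoly.roots.map (fun a => r - a)))
          * (M.charpoly.roots.map (fun a => r - a)).prod := Multiset.prod_map_neg _
    rw [h4, Multiset.card_map, hcard]
  have hps : p = C p.leadingCoeff * (p.roots.map (fun a => X - C a)).prod :=
    (IsAlgClosed.splits p).eq_prod_roots
  set l := p.roots.toList with hl
  have hlcoe : (l : Multiset ℂ) = p.roots := Multiset.coe_toList _
  have haeval : Polynomial.aeval M p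
      = algebraMap ℂ (Matrix (Fin nn) (Fin nn) ℂ) p.leadingCoeff
        * ((l.map (fun r => M - algebraMap ℂ (Matrix (Fin nn) (Fin nn) ℂ) r)).prod) := by
    conv_lhs => rw [hps]
    rw [_root_.map_mul, Polynomial.aeval_C]
    congr 1
    rw [← hlcoe, Multiset.map_coe, Multiset.prod_coe, map_list_prod (Polynomial.aeval M),
      List.map_map]
    exact congrArg List.prod (List.map_congr_left (fun r _ => by
      simp only [Function.comp_apply, map_sub, Polynomial.aeval_X, Polynomial.aeval_C]))
  rw [haeval, Algebra.algebraMap_eq_smul_one, smul_mul_assoc, one_mul, Matrix.det_smul,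
    Fintype.card_fin]
  have hdetprod : ((l.map (fun r => M - algebraMap ℂ (Matrix (Fin nn) (Fin nn) ℂ) r)).prod).det
      = (l.map (fun r => (M.charpoly.roots.map (fun a => a - r)).prod)).prod := by
    rw [← Matrix.coe_detMonoidHom, MonoidHom.map_list_prod, List.map_map]
    refine congrArg _ (List.map_congr_left (fun r _ => ?_))
    simp only [Function.comp_apply, Matrix.coe_detMonoidHom]
    exact hdet1 r
  rw [hdetprod, list_multiset_prod_comm l M.charpoly.roots (fun a r => a - r)]
  -- now compute the right-hand side
  have heval : ∀ a : ℂ, p.eval a = p.leadingCoeff * (l.map (fun r => a - r)).prod := by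
    intro a
    conv_lhs => rw [hps]
    rw [eval_mul, eval_C, eval_multiset_prod, Multiset.map_map, ← hlcoe, Multiset.map_coe,
      Multiset.prod_coe]
    refine congrArg _ (congrArg List.prod (List.map_congr_left (fun r _ => by
      simp only [Function.comp_apply, eval_sub, eval_X, eval_C])))
  have : (M.charpoly.roots.map (fun a => p.eval a)).prod
      = (M.charpoly.roots.map (fun a =>
          p.leadingCoeff * (l.map (fun r => a - r)).prod)).prod := by
    congr 1
    exact Multiset.map_congr rfl (fun a _ => heval a)
  rw [this, Multiset.prod_map_mul]
  congr 1
  rw [Multiset.map_const', Multiset.prod_replicate, hcard]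

lemma trace_pow {nn : ℕ} (M : Matrix (Fin nn) (Fin nn) ℂ) (k : ℕ) (hk : 1 ≤ k) :
    Matrix.trace (M ^ k) = (M.charpoly.roots.map (fun a => a ^ k)).sum := by
  have hcharpow : (M ^ k).charpoly
      = ((M.charpoly.roots.map (fun a => a ^ k)).map (fun a => X - C a)).prod := by
    apply Polynomial.funext
    intro y
    have hp : (C y - X ^ k : Polynomial ℂ) ≠ 0 := by
      have hmono : (X ^ k - C y : Polynomial ℂ).Monic := monic_X_pow_sub_C y (by omega)
      intro h
      apply hmono.ne_zero
      have : (X ^ k - C y : Polynomial ℂ) = -(C y - X ^ k) := by ring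
      rw [this, h, neg_zero]
    have h1 : Matrix.scalar (Fin nn) y - M ^ k = Polynomial.aeval M (C y - X ^ k) := by
      rw [map_sub, Polynomial.aeval_C, map_pow, Polynomial.aeval_X]
      rfl
    rw [eval_charpoly', h1, det_aeval M hp, eval_multiset_prod, Multiset.map_map,
      Multiset.map_map]
    congr 1
    refine Multiset.map_congr rfl (fun a _ => ?_)
    simp
  rw [Matrix.trace_eq_sum_roots_charpoly, hcharpow, roots_multiset_prod_X_sub_C]

lemma key (n m : ℕ) (hn : 1 ≤ n) (hm : 1 ≤ m) (c : ℕ → ℂ) :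
    ∃ q : Fin n → Polynomial ℂ, (∀ i, q i ≠ 0) ∧
      ∀ v : Fin n → ℂ, (∀ j : Fin n, ∑ i, v i ^ (m + (j : ℕ)) = c (m + (j : ℕ))) →
        ∀ i, (q i).eval (v i) = 0 := by
  classical
  set P : Fin n → MvPolynomial (Fin n) ℂ :=
    fun j => ∑ i, MvPolynomial.X i ^ (m + (j : ℕ)) with hPdef
  have hPhom : ∀ j : Fin n, (P j).IsHomogeneous (m + (j : ℕ)) := by
    intro j
    refine MvPolynomial.IsHomogeneous.sum _ _ _ (fun i _ => ?_)
    simpa using (MvPolynomial.isHomogeneous_X ℂ i).pow (m + (j : ℕ))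
  set J : Ideal (MvPolynomial (Fin n) ℂ) := Ideal.span (Set.range P) with hJdef
  -- Nullstellensatz: each X i is in the radical of J
  have hrad : ∀ i : Fin n, MvPolynomial.X i ∈ J.radical := by
    intro i
    rw [← MvPolynomial.vanishingIdeal_zeroLocus_eq_radical (K := ℂ) J]
    rw [MvPolynomial.mem_vanishingIdeal_iff]
    intro v hv
    have hv0 : v = 0 := by
      refine power_sums_zero hm v (fun j => ?_)
      have := (MvPolynomial.mem_zeroLocus_iff).1 hv (P j) (Ideal.subset_span ⟨j, rfl⟩)
      simpa [hPdef] using this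
    simp [hv0]
  have hradN : ∀ i : Fin n, ∃ N, MvPolynomial.X i ^ N ∈ J :=
    fun i => Ideal.mem_radical_iff.1 (hrad i)
  choose N₀ hN₀ using hradN
  set N : ℕ := (Finset.univ.sup N₀) + 1 with hNdef
  have hN1 : 1 ≤ N := by omega
  have hXN : ∀ i, MvPolynomial.X i ^ N ∈ J := by
    intro i
    have hle : N₀ i ≤ N := by
      have := Finset.le_sup (f := N₀) (Finset.mem_univ i); omega
    have : MvPolynomial.X (R := ℂ) i ^ N
        = MvPolynomial.X i ^ (N - N₀ i) * MvPolynomial.X i ^ (N₀ i) := by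
      rw [← pow_add]; congr 1; omega
    rw [this]
    exact Ideal.mul_mem_left _ _ (hN₀ i)
  set D : ℕ := n * N with hDdef
  have hD1 : 1 ≤ D := Nat.one_le_iff_ne_zero.2 (by positivity)
  set I : Ideal (MvPolynomial (Fin n) ℂ) :=
    Ideal.span (Set.range fun j : Fin n => P j - MvPolynomial.C (c (m + (j : ℕ)))) with hIdef
  let R := MvPolynomial (Fin n) ℂ ⧸ I
  let mk : MvPolynomial (Fin n) ℂ →ₐ[ℂ] R := Ideal.Quotient.mkₐ ℂ I
  have hPc : ∀ j : Fin n, mk (P j) = algebraMap ℂ R (c (m + (j : ℕ))) := by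
    intro j
    have hmem : P j - MvPolynomial.C (c (m + (j : ℕ))) ∈ I := Ideal.subset_span ⟨j, rfl⟩
    have h0 : mk (P j - MvPolynomial.C (c (m + (j : ℕ)))) = 0 := by
      exact (Ideal.Quotient.eq_zero_iff_mem).2 hmem
    rw [map_sub, sub_eq_zero] at h0
    rw [h0, ← MvPolynomial.algebraMap_eq]
    exact mk.commutes _
  -- homogeneous decomposition of monomials lying in J
  have hdecomp : ∀ s : Fin n →₀ ℕ, (MvPolynomial.monomial s 1 : MvPolynomial (Fin n) ℂ) ∈ J →
      ∃ h : Fin n → MvPolynomial (Fin n) ℂ,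
        (∀ j, (h j).totalDegree ≤ s.degree - m) ∧
        (MvPolynomial.monomial s 1 : MvPolynomial (Fin n) ℂ) = ∑ j, h j * P j := by
    intro s hsJ
    rw [hJdef, Ideal.mem_span_range_iff_exists_fun] at hsJ
    obtain ⟨g, hg⟩ := hsJ
    refine ⟨fun j => if m + (j : ℕ) ≤ s.degree
      then MvPolynomial.homogeneousComponent (s.degree - (m + (j : ℕ))) (g j) else 0, ?_, ?_⟩
    · intro j
      dsimp only
      split_ifs with hc
      · exact le_trans
          (MvPolynomial.homogeneousComponent_isHomogeneous _ _).totalDegree_le (by omega)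
      · simp
    · have hmono : (MvPolynomial.monomial s 1 : MvPolynomial (Fin n) ℂ).IsHomogeneous s.degree :=
        MvPolynomial.isHomogeneous_monomial _ rfl
      calc (MvPolynomial.monomial s 1 : MvPolynomial (Fin n) ℂ)
          = MvPolynomial.homogeneousComponent s.degree (MvPolynomial.monomial s 1) := by
            rw [MvPolynomial.homogeneousComponent_of_mem
              ((MvPolynomial.mem_homogeneousSubmodule _ _).2 hmono), if_pos rfl]
        _ = MvPolynomial.homogeneousComponent s.degree (∑ j, g j * P j) := by rw [hg]
        _ = ∑ j, MvPolynomial.homogeneousComponent s.degree (g j * P j) := map_sum _ _ _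
        _ = ∑ j : Fin n, (if m + (j : ℕ) ≤ s.degree
              then MvPolynomial.homogeneousComponent (s.degree - (m + (j : ℕ))) (g j)
              else 0) * P j := by
            refine Finset.sum_congr rfl (fun j _ => ?_)
            exact homogeneousComponent_mul_homogeneous (g j) (P j) (hPhom j) s.degree
  -- the finite set of small monomials
  set T : Finset (MvPolynomial (Fin n) ℂ) :=
    Finset.image (fun t : Fin n → Fin D =>
      MvPolynomial.monomial (Finsupp.equivFunOnFinite.symm (fun i => ((t i : ℕ)))) 1)
      Finset.univ with hTdef
  set SP : Submodule ℂ R := Submodule.span ℂ ((T.image mk : Finset R) : Set R) with hSPdef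
  have main : ∀ d : ℕ, ∀ f : MvPolynomial (Fin n) ℂ, f.totalDegree ≤ d → mk f ∈ SP := by
    intro d
    induction d using Nat.strong_induction_on with
    | _ d IH =>
      have hmono : ∀ s : Fin n →₀ ℕ, s.degree ≤ d →
          mk (MvPolynomial.monomial s 1) ∈ SP := by
        intro s hs
        by_cases hsD : s.degree < D
        · apply Submodule.subset_span
          rw [Finset.coe_image]
          refine Set.mem_image_of_mem mk ?_
          rw [hTdef, Finset.coe_image, Set.mem_image]
          refine ⟨fun i => (⟨s i, lt_of_le_of_lt (Finsupp.le_degree i s) hsD⟩ : Fin D),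
            by simp, ?_⟩
          have : (fun i => (((⟨s i, lt_of_le_of_lt (Finsupp.le_degree i s) hsD⟩ : Fin D)) : ℕ))
              = ⇑s := rfl
          rw [this, Finsupp.equivFunOnFinite_symm_coe]
        · have hsD' : D ≤ s.degree := not_lt.mp hsD
          obtain ⟨i₀, hi₀⟩ : ∃ i₀ : Fin n, N ≤ s i₀ := by
            by_contra h'
            push_neg at h'
            have hb : s.degree ≤ n * (N - 1) := by
              calc s.degree = ∑ i ∈ s.support, s i := rfl
                _ ≤ ∑ i ∈ s.support, (N - 1) :=
                    Finset.sum_le_sum (fun i _ => by have := h' i; omega)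
                _ = s.support.card * (N - 1) := by rw [Finset.sum_const, smul_eq_mul]
                _ ≤ n * (N - 1) := by
                    have : s.support.card ≤ n := by
                      simpa using Finset.card_le_univ s.support
                    exact Nat.mul_le_mul_right _ this
            have hNN : n * N = n * (N - 1) + n := by
              have h1 : N - 1 + 1 = N := by omega
              calc n * N = n * (N - 1 + 1) := by rw [h1]
                _ = n * (N - 1) + n := Nat.mul_succ n (N - 1)
            omega
          have hmemJ : (MvPolynomial.monomial s 1 : MvPolynomial (Fin n) ℂ) ∈ J := by
            have hsplit : s = (s - Finsupp.single i₀ N) + Finsupp.single i₀ N := by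
              ext a
              simp only [Finsupp.add_apply, Finsupp.tsub_apply, Finsupp.single_apply]
              split_ifs with ha
              · subst ha; omega
              · omega
            have : (MvPolynomial.monomial s 1 : MvPolynomial (Fin n) ℂ)
                = MvPolynomial.monomial (s - Finsupp.single i₀ N) 1 * MvPolynomial.X i₀ ^ N := by
              rw [MvPolynomial.X_pow_eq_monomial, MvPolynomial.monomial_mul, mul_one]
              rw [← hsplit]
            rw [this]
            exact Ideal.mul_mem_left _ _ (hXN i₀)
          obtain ⟨h, hdeg, heq⟩ := hdecomp s hmemJ
          rw [heq, map_sum]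
          refine Submodule.sum_mem _ (fun j _ => ?_)
          rw [_root_.map_mul, hPc j, mul_comm, ← Algebra.smul_def]
          refine Submodule.smul_mem _ _ ?_
          have hd1 : s.degree ≤ d := hs
          refine IH (d - 1) (by omega) (h j) ?_
          have := hdeg j; omega
      intro f hf
      rw [MvPolynomial.as_sum f, map_sum]
      refine Submodule.sum_mem _ (fun s hsupp => ?_)
      have : (MvPolynomial.monomial s (MvPolynomial.coeff s f))
          = (MvPolynomial.coeff s f) • (MvPolynomial.monomial s 1 : MvPolynomial (Fin n) ℂ) := by
        rw [MvPolynomial.smul_monomial, smul_eq_mul, mul_one]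
      rw [this, _root_.map_smul]
      refine Submodule.smul_mem _ _ (hmono s ?_)
      have h1 : s.degree ≤ f.totalDegree := MvPolynomial.le_totalDegree hsupp
      omega
  -- finite dimensionality of the quotient
  have hfin : Module.Finite ℂ R := by
    refine ⟨⟨T.image mk, ?_⟩⟩
    rw [eq_top_iff]
    intro x _
    obtain ⟨f, rfl⟩ := Ideal.Quotient.mkₐ_surjective ℂ I x
    exact main f.totalDegree f le_rfl
  have hint : ∀ i : Fin n, IsIntegral ℂ (mk (MvPolynomial.X i)) :=
    fun i => IsIntegral.of_finite ℂ _
  choose q hqmonic hqzero using hint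
  refine ⟨q, fun i => (hqmonic i).ne_zero, ?_⟩
  intro v hv i
  let φ : MvPolynomial (Fin n) ℂ →ₐ[ℂ] ℂ := MvPolynomial.aeval v
  have hφI : ∀ a ∈ I, φ a = 0 := by
    intro a ha
    refine (Ideal.span_le.2 ?_ : I ≤ RingHom.ker (φ : MvPolynomial (Fin n) ℂ →+* ℂ)) ha
    rintro x ⟨j, rfl⟩
    simp only [SetLike.mem_coe, RingHom.mem_ker]
    have : φ (P j - MvPolynomial.C (c (m + (j : ℕ)))) = 0 := by
      rw [map_sub]
      have h1 : φ (P j) = c (m + (j : ℕ)) := by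
        rw [hPdef]
        simpa [φ] using hv j
      simp [h1, φ]
    exact this
  let ψ : R →ₐ[ℂ] ℂ := Ideal.Quotient.liftₐ I φ hφI
  have hψmk : ∀ a, ψ (mk a) = φ a := by
    intro a
    simp only [ψ, mk, Ideal.Quotient.mkₐ_eq_mk, Ideal.Quotient.liftₐ_apply]
    exact Ideal.Quotient.lift_mk I _ _
  have h0 : (Polynomial.aeval (v i)) (q i) = 0 := by
    have h1 := congrArg ψ (hqzero i)
    rw [map_zero, ← Polynomial.aeval_def, ← Polynomial.aeval_algHom_apply, hψmk,
      MvPolynomial.aeval_X] at h1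
    exact h1
  simpa using h0


end Stmt18Aux

open Matrix

/-- If the traces `tr(A^k)` are prescribed values `c_k` for `k` in a window of `n`
consecutive integers `{m, …, m+n−1}` with `m ≥ 1`, then the characteristic polynomial of
the `n×n` complex matrix `A` belongs to a finite set depending only on the data. -/
theorem stmt18 (n m : ℕ) (hn : 1 ≤ n) (hm : 1 ≤ m) (c : ℕ → ℂ) :
    ∃ S : Finset (Polynomial ℂ), ∀ A : Matrix (Fin n) (Fin n) ℂ,
      (∀ k ∈ Finset.Icc m (m + n - 1), Matrix.trace (A ^ k) = c k) →
      A.charpoly ∈ S := by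
  classical
  obtain ⟨q, hq0, hq⟩ := Stmt18Aux.key n m hn hm c
  refine ⟨Finset.image (fun w : Fin n → ℂ => ∏ i, (Polynomial.X - Polynomial.C (w i)))
    (Fintype.piFinset (fun i => (q i).roots.toFinset)), ?_⟩
  intro A hA
  have hcard : Multiset.card A.charpoly.roots = n := by
    rw [Polynomial.splits_iff_card_roots.mp (IsAlgClosed.splits _),
      Matrix.charpoly_natDegree_eq_dim, Fintype.card_fin]
  obtain ⟨v, hv⟩ := Stmt18Aux.exists_enum A.charpoly.roots n hcard
  have hsum : ∀ k : ℕ, 1 ≤ k → Matrix.trace (A ^ k) = ∑ i, v i ^ k := by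
    intro k hk
    rw [Stmt18Aux.trace_pow A k hk, hv, Multiset.map_map]
    rfl
  have hvc : ∀ j : Fin n, ∑ i, v i ^ (m + (j : ℕ)) = c (m + (j : ℕ)) := by
    intro j
    have hj := j.isLt
    rw [← hsum (m + (j : ℕ)) (by omega)]
    exact hA (m + (j : ℕ)) (Finset.mem_Icc.2 ⟨by omega, by omega⟩)
  have hroots : ∀ i, v i ∈ (q i).roots.toFinset := by
    intro i
    rw [Multiset.mem_toFinset, Polynomial.mem_roots (hq0 i)]
    exact hq v hvc i
  refine Finset.mem_image.2 ⟨v, Fintype.mem_piFinset.2 hroots, ?_⟩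
  rw [(IsAlgClosed.splits _).eq_prod_roots_of_monic A.charpoly_monic, hv, Multiset.map_map]
  rfl
end
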